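/- Let f = (f_1,…,f_p) : (ℂ^n,0) → (ℂ^p,0) be a map-germ, let x^α be a monomial in the source variables with α a nonzero multi-index, set γ(x) = (0,…,0,x^α) ∈ ℂ^p, and define the one-parameter unfolding F(x,λ) = (f(x) + λ·γ(x), λ). Suppose F is cross-substantial, i.e. F admits a liftable vector field η = (η_1,…,η_p,η_{p+1}) : (ℂ^{p+1},0) → ℂ^{p+1} with last component η_{p+1}(X_1,…,X_p,Λ) = X_p. Then there exist holomorphic vector field germs ξ̃ : (ℂ^n,0) → ℂ^n and η̃ : (ℂ^p,0) → ℂ^p such that f_p(x)·γ(x) = df(x)·ξ̃(x) + η̃(f(x)) for all x near 0 (i.e. f_p·γ belongs to the extended A-tangent space T𝒜_e f = tf(θ_n) + ωf(θ_p)). -/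

import Mathlib

open Filter Topology

noncomputable section

variable {E F : Type*}

/-- A map-germ at the origin: a holomorphic map defined near `0` sending `0` to `0`. -/
def IsMapGerm [NormedAddCommGroup E] [NormedSpace ℂ E]
    [NormedAddCommGroup F] [NormedSpace ℂ F] (f : E → F) : Prop :=
  AnalyticAt ℂ f 0 ∧ f 0 = 0

/-- A holomorphic vector field germ `η` is liftable over `Fm` if there is a holomorphic
vector field germ `ξ` with `dFm(x)·ξ(x) = η(Fm(x))` near `0`. -/
def IsLiftable [NormedAddCommGroup E] [NormedSpace ℂ E]
    [NormedAddCommGroup F] [NormedSpace ℂ F] (Fm : E → F) (η : F → F) : Prop :=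
  AnalyticAt ℂ η 0 ∧ ∃ ξ : E → E, AnalyticAt ℂ ξ 0 ∧
    ∀ᶠ x in 𝓝 0, fderiv ℂ Fm x (ξ x) = η (Fm x)

/-- Lemma 6.9 of the paper: with `p = p'+1`, `γ(x) = (0,…,0,x^α)` and
`F(x,λ) = (f(x) + λ·γ(x), λ)`, if `F` is cross-substantial (it admits a liftable vector
field whose last component is `X_p`), then `f_p·γ` belongs to the extended `A`-tangent
space of `f`: there are holomorphic vector field germs `ξ̃`, `η̃` with
`f_p(x)·γ(x) = df(x)·ξ̃(x) + η̃(f(x))` near `0`. -/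
theorem cross_substantial_tangent (n p' : ℕ)
    (f : (Fin n → ℂ) → (Fin (p' + 1) → ℂ)) (hf : IsMapGerm f)
    (α : Fin n → ℕ) (hα : α ≠ 0)
    (η : (Fin (p' + 1) → ℂ) × ℂ → (Fin (p' + 1) → ℂ) × ℂ)
    (hlift : IsLiftable (fun w : (Fin n → ℂ) × ℂ =>
        (f w.1 + w.2 • (Pi.single (Fin.last p') (∏ i, w.1 i ^ α i) : Fin (p' + 1) → ℂ), w.2)) η)
    (hlast : ∀ᶠ W in 𝓝 (0 : (Fin (p' + 1) → ℂ) × ℂ), (η W).2 = W.1 (Fin.last p')) :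
    ∃ (ξt : (Fin n → ℂ) → (Fin n → ℂ)) (ηt : (Fin (p' + 1) → ℂ) → (Fin (p' + 1) → ℂ)),
      AnalyticAt ℂ ξt 0 ∧ AnalyticAt ℂ ηt 0 ∧
      ∀ᶠ x in 𝓝 (0 : Fin n → ℂ),
        f x (Fin.last p') • (Pi.single (Fin.last p') (∏ i, x i ^ α i) : Fin (p' + 1) → ℂ) =
          fderiv ℂ f x (ξt x) + ηt (f x) := by
  obtain ⟨hη, ξ, hξ, heq⟩ := hlift
  set γ : (Fin n → ℂ) → (Fin (p' + 1) → ℂ) :=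
    fun y => Pi.single (Fin.last p') (∏ i, y i ^ α i) with hγdef
  have hinl : AnalyticAt ℂ (fun x : Fin n → ℂ => ((x, (0:ℂ)) : (Fin n → ℂ) × ℂ)) 0 :=
    (ContinuousLinearMap.inl ℂ (Fin n → ℂ) ℂ).analyticAt 0
  have hinl' : AnalyticAt ℂ
      (fun Y : Fin (p' + 1) → ℂ => ((Y, (0:ℂ)) : (Fin (p' + 1) → ℂ) × ℂ)) 0 :=
    (ContinuousLinearMap.inl ℂ (Fin (p' + 1) → ℂ) ℂ).analyticAt 0
  refine ⟨fun x => -(ξ (x, 0)).1, fun Y => (η (Y, 0)).1, ?_, ?_, ?_⟩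
  · have h1 : AnalyticAt ℂ (fun x : Fin n → ℂ => ξ (x, 0)) 0 :=
      AnalyticAt.comp_of_eq hξ hinl rfl
    have h2 : AnalyticAt ℂ (fun w : (Fin n → ℂ) × ℂ => w.1) (ξ ((0:Fin n → ℂ), (0:ℂ))) :=
      (ContinuousLinearMap.fst ℂ (Fin n → ℂ) ℂ).analyticAt _
    exact (AnalyticAt.comp_of_eq h2 h1 rfl).neg
  · have h1 : AnalyticAt ℂ (fun Y : Fin (p' + 1) → ℂ => η (Y, 0)) 0 :=
      AnalyticAt.comp_of_eq hη hinl' rfl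
    have h2 : AnalyticAt ℂ (fun w : (Fin (p' + 1) → ℂ) × ℂ => w.1)
        (η ((0:Fin (p' + 1) → ℂ), (0:ℂ))) :=
      (ContinuousLinearMap.fst ℂ (Fin (p' + 1) → ℂ) ℂ).analyticAt _
    exact AnalyticAt.comp_of_eq h2 h1 rfl
  · have hfd : ∀ᶠ x in 𝓝 (0 : Fin n → ℂ), AnalyticAt ℂ f x := hf.1.eventually_analyticAt
    have hmapx : Tendsto (fun x : Fin n → ℂ => ((x, (0:ℂ)) : (Fin n → ℂ) × ℂ))
        (𝓝 0) (𝓝 0) := hinl.continuousAt.tendsto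
    have hcf : Tendsto f (𝓝 0) (𝓝 0) := by
      have := hf.1.continuousAt.tendsto
      rwa [hf.2] at this
    have hmapf : Tendsto (fun x : Fin n → ℂ => ((f x, (0:ℂ)) : (Fin (p' + 1) → ℂ) × ℂ))
        (𝓝 0) (𝓝 0) := by
      have : Tendsto (fun x : Fin n → ℂ => ((f x, (0:ℂ)) : (Fin (p' + 1) → ℂ) × ℂ))
          (𝓝 0) (𝓝 (0, 0)) := hcf.prodMk_nhds tendsto_const_nhds
      simpa [← Prod.mk_zero_zero] using this
    have h1 := hmapx.eventually heq
    have h2 := hmapf.eventually hlast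
    filter_upwards [hfd, h1, h2] with x hfx h1x h2x
    -- differentiability of γ
    have hm : AnalyticAt ℂ (fun y : Fin n → ℂ => ∏ i, y i ^ α i) x :=
      Finset.analyticAt_fun_prod _ (fun i _ =>
        ((ContinuousLinearMap.proj (R := ℂ) (φ := fun _ : Fin n => ℂ) i).analyticAt x).pow _)
    have hγeq : γ = fun y : Fin n → ℂ =>
        (∏ i, y i ^ α i) • (Pi.single (Fin.last p') (1:ℂ) : Fin (p' + 1) → ℂ) := by
      funext y
      rw [hγdef]
      rw [← Pi.single_smul, smul_eq_mul, mul_one]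
    have hγdiff : DifferentiableAt ℂ γ x := by
      rw [hγeq]
      exact hm.differentiableAt.smul_const _
    -- derivative of Fm at (x, 0)
    have hA : HasFDerivAt (fun w : (Fin n → ℂ) × ℂ => f w.1)
        ((fderiv ℂ f x).comp (ContinuousLinearMap.fst ℂ (Fin n → ℂ) ℂ)) (x, 0) :=
      (hfx.differentiableAt.hasFDerivAt).comp _ hasFDerivAt_fst
    have hB := (hasFDerivAt_snd (𝕜 := ℂ) (E := Fin n → ℂ) (F := ℂ)
        (p := ((x, (0:ℂ)) : (Fin n → ℂ) × ℂ))).smul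
        ((hγdiff.hasFDerivAt).comp ((x, (0:ℂ)) : (Fin n → ℂ) × ℂ) hasFDerivAt_fst)
    have hF : HasFDerivAt (fun w : (Fin n → ℂ) × ℂ => (f w.1 + w.2 • γ w.1, w.2)) _ (x, 0) :=
      HasFDerivAt.prodMk (hA.add hB) hasFDerivAt_snd
    rw [hF.fderiv] at h1x
    simp only [ContinuousLinearMap.prod_apply, ContinuousLinearMap.add_apply,
      ContinuousLinearMap.coe_comp', ContinuousLinearMap.coe_fst',
      ContinuousLinearMap.coe_snd', ContinuousLinearMap.smul_apply,
      ContinuousLinearMap.smulRight_apply, Function.comp_apply, zero_smul, add_zero,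
      zero_add] at h1x
    rw [Prod.ext_iff] at h1x
    obtain ⟨hfst, hsnd⟩ := h1x
    simp only [zero_smul, add_zero, zero_add] at hfst hsnd
    rw [h2x] at hsnd
    rw [hsnd] at hfst
    have hγx : (Pi.single (Fin.last p') (∏ i, x i ^ α i) : Fin (p' + 1) → ℂ) = γ x := rfl
    rw [map_neg, ← hfst, hγx]
    abel
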